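/- Let n ≥ 2 and 1 ≤ k < i ≤ j ≤ n be integers with i + j − k ≥ n, and let δ = 1 if i = j and δ = 0 otherwise. Define the polynomial p^k_{i,j}(z) ∈ ℤ[h][z] by p^k_{i,j}(z) = h²(z+h)^{i+j−k−3} + h^{2−δ} z^{i−k} (z+h)^{k−1+(j−i−1)(1−δ)} (z+2h)^{i−k−1} + Σ_{l=k+1}^{i−1} h³ z^{l−k} (z+h)^{i+j+k−2l−3} (z+2h)^{l−k−1}. Then the coefficient of z^{i+j−k−n} in p^k_{i,j}(z) equals C(i+j−k−2, n−2)·h^{n−1}, where C(p,q) denotes the binomial coefficient (with C(p,q) = 0 when q > p). -/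
import Mathlib

open Polynomial Finset

lemma lemA {R : Type*} [CommRing R] (z h : R) (a : ℕ) : ∀ c : ℕ,
    h^2*(z+h)^(c+2*a) + h*z^(a+1)*(z+h)^c*(z+2*h)^a
      + ∑ t ∈ Finset.range a, h^3*z^(t+1)*(z+h)^(c+2*(a-1-t))*(z+2*h)^t
    = h*(z+h)^(c+2*a+1) := by
  induction a with
  | zero => intro c; simp; ring
  | succ a ih =>
    intro c
    rw [Finset.sum_range_succ]
    have hs : ∑ t ∈ Finset.range a, h^3*z^(t+1)*(z+h)^(c+2*(a+1-1-t))*(z+2*h)^t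
        = ∑ t ∈ Finset.range a, h^3*z^(t+1)*(z+h)^((c+2)+2*(a-1-t))*(z+2*h)^t :=
      Finset.sum_congr rfl fun t ht => by
        rw [show c+2*(a+1-1-t) = (c+2)+2*(a-1-t) from by
          have := Finset.mem_range.mp ht; omega]
    rw [hs, show a+1-1-a = 0 from by omega]
    linear_combination ih (c+2)

lemma lemB {R : Type*} [CommRing R] (z h : R) (a c b' : ℕ) :
    h^2*(z+h)^(c+b'+1+2*a) + h^2*z^(a+1)*(z+h)^(c+b')*(z+2*h)^a
      + ∑ t ∈ Finset.range a, h^3*z^(t+1)*(z+h)^(c+b'+1+2*(a-1-t))*(z+2*h)^t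
    = h*(z+h)^(c+b'+1+2*a+1) - h*z^(a+2)*(z+h)^(c+b')*(z+2*h)^a := by
  linear_combination lemA z h a (c+b'+1)

theorem csm_proj_weight_polynomial (n i j k : ℕ) (hn : 2 ≤ n)
    (hk : 1 ≤ k) (hki : k < i) (hij : i ≤ j) (hjn : j ≤ n) (hijk : n ≤ i + j - k)
    (δ : ℕ) (hδ : δ = if i = j then 1 else 0) :
    (C ((X : ℤ[X]) ^ 2) * (X + C X) ^ (i + j - k - 3) +
        C ((X : ℤ[X]) ^ (2 - δ)) * X ^ (i - k) *
          (X + C X) ^ (k - 1 + (j - i - 1) * (1 - δ)) * (X + 2 * C X) ^ (i - k - 1) +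
        ∑ l ∈ Finset.Icc (k + 1) (i - 1),
          C ((X : ℤ[X]) ^ 3) * X ^ (l - k) *
            (X + C X) ^ (i + j + k - 2 * l - 3) * (X + 2 * C X) ^ (l - k - 1)).coeff
        (i + j - k - n) =
      ((i + j - k - 2).choose (n - 2) : ℤ[X]) * X ^ (n - 1) := by
  obtain ⟨c, a, b, rfl, rfl, rfl⟩ : ∃ c a b, k = c+1 ∧ i = c+a+2 ∧ j = c+a+2+b :=
    ⟨k-1, i-k-1, j-i, by omega, by omega, by omega⟩
  rw [show c+a+2-(c+1)-1 = a from by omega, show c+a+2-(c+1) = a+1 from by omega,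
    show c+a+2-1 = c+a+1 from by omega, ← Finset.Ico_add_one_right_eq_Icc]
  rw [Finset.sum_Ico_eq_sum_range, show c+a+1+1-(c+1+1) = a from by omega]
  rcases b with _ | b'
  · -- i = j case
    simp only [Nat.add_zero] at hδ hijk ⊢
    simp only [eq_self_iff_true, if_true] at hδ
    subst hδ
    rw [show c+a+2+(c+a+2)-(c+1)-3 = c+2*a from by omega,
      show c+1-1+((c+a+2)-(c+a+2)-1)*(1-1) = c from by omega]
    have hsum : ∑ t ∈ Finset.range a,
        C ((X:ℤ[X])^3) * X^(c+1+1+t-(c+1)) *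
          (X + C X)^(c+a+2+(c+a+2)+(c+1)-2*(c+1+1+t)-3) * (X+2*C X)^(c+1+1+t-(c+1)-1)
        = ∑ t ∈ Finset.range a,
        (C (X:ℤ[X]))^3 * X^(t+1) * (X + C X)^(c+2*(a-1-t)) * (X+2*C X)^t :=
      Finset.sum_congr rfl fun t ht => by
        have ht' := Finset.mem_range.mp ht
        rw [map_pow, show c+1+1+t-(c+1)-1 = t from by omega,
          show c+1+1+t-(c+1) = t+1 from by omega,
          show c+a+2+(c+a+2)+(c+1)-2*(c+1+1+t)-3 = c+2*(a-1-t) from by omega]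
    rw [hsum]
    simp only [map_pow, show (2:ℕ)-1 = 1 from rfl, pow_one]
    rw [lemA (X : (ℤ[X])[X]) (C X) a c]
    rw [coeff_C_mul, coeff_X_add_C_pow]
    rw [show c+2*a+1-(c+a+2+(c+a+2)-(c+1)-n) = n-2 from by omega,
      show c+a+2+(c+a+2)-(c+1)-n = c+2*a+1-(n-2) from by omega,
      Nat.choose_symm (by omega), show c+a+2+(c+a+2)-(c+1)-2 = c+2*a+1 from by omega,
      show n-1 = (n-2)+1 from by omega]
    ring
  · -- i < j case
    rw [if_neg (by omega)] at hδ
    subst hδ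
    rw [show c+a+2+(c+a+2+(b'+1))-(c+1)-3 = c+b'+1+2*a from by omega,
      show c+1-1+((c+a+2+(b'+1))-(c+a+2)-1)*(1-0) = c+b' from by omega]
    have hsum : ∑ t ∈ Finset.range a,
        C ((X:ℤ[X])^3) * X^(c+1+1+t-(c+1)) *
          (X + C X)^(c+a+2+(c+a+2+(b'+1))+(c+1)-2*(c+1+1+t)-3) * (X+2*C X)^(c+1+1+t-(c+1)-1)
        = ∑ t ∈ Finset.range a,
        (C (X:ℤ[X]))^3 * X^(t+1) * (X + C X)^(c+b'+1+2*(a-1-t)) * (X+2*C X)^t :=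
      Finset.sum_congr rfl fun t ht => by
        have ht' := Finset.mem_range.mp ht
        rw [map_pow, show c+1+1+t-(c+1)-1 = t from by omega,
          show c+1+1+t-(c+1) = t+1 from by omega,
          show c+a+2+(c+a+2+(b'+1))+(c+1)-2*(c+1+1+t)-3 = c+b'+1+2*(a-1-t) from by omega]
    rw [hsum]
    simp only [map_pow, Nat.sub_zero]
    rw [lemB (X : (ℤ[X])[X]) (C X) a c b']
    rw [coeff_sub, coeff_C_mul, coeff_X_add_C_pow]
    rw [show C (X:ℤ[X]) * X^(a+2) * (X+C X)^(c+b') * (X+2*C X)^a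
        = (C X * (X+C X)^(c+b') * (X+2*C X)^a) * X^(a+2) from by ring,
      coeff_mul_X_pow', if_neg (by omega)]
    rw [show c+b'+1+2*a+1-(c+a+2+(c+a+2+(b'+1))-(c+1)-n) = n-2 from by omega,
      show c+a+2+(c+a+2+(b'+1))-(c+1)-n = (c+b'+1+2*a+1)-(n-2) from by omega,
      Nat.choose_symm (by omega),
      show c+a+2+(c+a+2+(b'+1))-(c+1)-2 = c+b'+1+2*a+1 from by omega,
      show n-1 = (n-2)+1 from by omega]
    ring
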